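/- arXiv:math/0507560 — 5 statements merged into one kernel-verified Lean document; each statement's English description precedes it below -/
import Mathlib

section
/- Let L : ℝⁿ × ℝⁿ → ℝ be a smooth Lagrangian, G a canonical semispray coefficient family for L, and S : ℝⁿ × ℝⁿ → ℝⁿ × ℝⁿ the vector field S(x,y) = (y, −2G(x,y)). For smooth vector fields X, Y : ℝⁿ × ℝⁿ → ℝⁿ × ℝⁿ let [X,Y](p) = (DY)(p)(X(p)) − (DX)(p)(Y(p)) denote the Lie bracket, and let θ_L(X)(x,y) = Σ_i ∂L/∂yⁱ(x,y) · (X(x,y))_xⁱ, where (X(x,y))_x is the first (base) component of X(x,y). Then for every smooth vector field X and every point p: S acting on the function θ_L(X) at p, minus θ_L([S,X])(p), equals DL(p)(X(p)); i.e. 𝓛_S θ_L = dL. -/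
open scoped ContDiff

/-- The tangent bundle of `ℝⁿ`, identified with `ℝⁿ × ℝⁿ` (base coordinates `x`,
fibre coordinates `y`). -/
abbrev TM (n : ℕ) := (Fin n → ℝ) × (Fin n → ℝ)

/-- Partial derivative of `F` in the `i`-th base coordinate `xⁱ`. -/
noncomputable def pdx {n : ℕ} (F : TM n → ℝ) (i : Fin n) (p : TM n) : ℝ :=
  fderiv ℝ F p (Pi.single i 1, 0)

/-- Partial derivative of `F` in the `i`-th fibre coordinate `yⁱ`. -/
noncomputable def pdy {n : ℕ} (F : TM n → ℝ) (i : Fin n) (p : TM n) : ℝ :=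
  fderiv ℝ F p (0, Pi.single i 1)

/-- The metric tensor `g_ij = ½ ∂²L/∂yⁱ∂yʲ` of a Lagrangian `L`. -/
noncomputable def gmetric {n : ℕ} (L : TM n → ℝ) (i j : Fin n) (p : TM n) : ℝ :=
  (1 / 2) * pdy (pdy L j) i p

/-- `G` is a canonical semispray coefficient family for `L`:
`G` is smooth and `4 Σ_k g_ik Gᵏ = Σ_h yʰ ∂²L/∂xʰ∂yⁱ − ∂L/∂xⁱ` at every point. -/
def IsSemisprayFamily {n : ℕ} (L : TM n → ℝ) (G : TM n → Fin n → ℝ) : Prop :=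
  ContDiff ℝ ∞ G ∧ ∀ (p : TM n) (i : Fin n),
    4 * ∑ k, gmetric L i k p * G p k = ∑ h, p.2 h * pdx (pdy L i) h p - pdx L i p

/-- Lie bracket of vector fields on `ℝⁿ × ℝⁿ`:
`[X,Y](p) = (DY)(p)(X(p)) − (DX)(p)(Y(p))`. -/
noncomputable def lieBr {n : ℕ} (X Y : TM n → TM n) (p : TM n) : TM n :=
  fderiv ℝ Y p (X p) - fderiv ℝ X p (Y p)

section helpers
variable {n : ℕ}

lemma vec_decomp (v : TM n) :
    v = (∑ i : Fin n, v.1 i • (((Pi.single i 1 : Fin n → ℝ), (0 : Fin n → ℝ)) : TM n))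
      + ∑ i : Fin n, v.2 i • (((0 : Fin n → ℝ), (Pi.single i 1 : Fin n → ℝ)) : TM n) := by
  refine Prod.ext ?_ ?_ <;> funext j <;>
    simp [Prod.fst_sum, Prod.snd_sum, Finset.sum_apply, Pi.single_apply, mul_ite]

lemma fderiv_decomp (F : TM n → ℝ) (p v : TM n) :
    fderiv ℝ F p v = ∑ i, v.1 i * pdx F i p + ∑ i, v.2 i * pdy F i p := by
  conv_lhs => rw [vec_decomp v]
  simp only [map_add, map_sum, map_smul, smul_eq_mul, pdx, pdy]

lemma pdy_smooth (L : TM n → ℝ) (hL : ContDiff ℝ ∞ L) (i : Fin n) :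
    ContDiff ℝ ∞ (pdy L i) := by
  exact (hL.fderiv_right (le_refl _)).clm_apply contDiff_const

lemma pdy_pdy_symm (L : TM n → ℝ) (hL : ContDiff ℝ ∞ L) (i k : Fin n) (p : TM n) :
    pdy (pdy L i) k p = pdy (pdy L k) i p := by
  have hd : DifferentiableAt ℝ (fderiv ℝ L) p :=
    ((hL.fderiv_right (m := ∞) (le_refl _)).differentiable (by simp)) p
  have h : ∀ w v : TM n, fderiv ℝ (fun q => fderiv ℝ L q w) p v
      = fderiv ℝ (fderiv ℝ L) p v w := by
    intro w v
    rw [fderiv_clm_apply hd (differentiableAt_const _)]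
    simp
  have hsym := (hL.contDiffAt (x := p)).isSymmSndFDerivAt (by rw [minSmoothness_of_isRCLikeNormedField]; exact WithTop.coe_le_coe.2 le_top)
  have e : ∀ j : Fin n, pdy L j = fun q => fderiv ℝ L q ((0, Pi.single j 1) : TM n) :=
    fun _ => rfl
  simp only [pdy]
  rw [e i, e k, h, h, hsym]

end helpers

/-- `𝓛_S θ_L = dL`, i.e. for every smooth vector field `X` and point `p`,
`S(θ_L(X))(p) − θ_L([S,X])(p) = DL(p)(X(p))`, where `S(x,y) = (y, −2G(x,y))` is the
canonical semispray and `θ_L(X) = Σ_i ∂L/∂yⁱ · (X)_xⁱ` is the Cartan 1-form. -/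
theorem lie_deriv_cartan_one_form (n : ℕ) (L : TM n → ℝ) (hL : ContDiff ℝ ∞ L)
    (G : TM n → Fin n → ℝ) (hG : IsSemisprayFamily L G)
    (S : TM n → TM n) (hS : ∀ p : TM n, S p = (p.2, fun j => -2 * G p j)) :
    ∀ X : TM n → TM n, ContDiff ℝ ∞ X → ∀ p : TM n,
      fderiv ℝ (fun q => ∑ i, pdy L i q * (X q).1 i) p (S p)
        - ∑ i, pdy L i p * (lieBr S X p).1 i
        = fderiv ℝ L p (X p) := by
  intro X hX p
  have hSfun : S = fun q : TM n => ((q.2, fun j => -2 * G q j) : TM n) := funext hS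
  have hSc : ContDiff ℝ ∞ S := by
    rw [hSfun]
    exact contDiff_snd.prodMk (contDiff_pi.2 fun j => (contDiff_const.mul (contDiff_pi.1 hG.1 j)))
  have hXd : Differentiable ℝ X := hX.differentiable (by simp)
  have hSd : Differentiable ℝ S := hSc.differentiable (by simp)
  have hpdyd : ∀ i : Fin n, DifferentiableAt ℝ (pdy L i) p := fun i =>
    ((pdy_smooth L hL i).differentiable (by simp)) p
  have hXcomp : ∀ i : Fin n, fderiv ℝ (fun q => (X q).1 i) p
      = ((ContinuousLinearMap.proj i).comp
          (ContinuousLinearMap.fst ℝ (Fin n → ℝ) (Fin n → ℝ))).comp (fderiv ℝ X p) :=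
    fun i => (((ContinuousLinearMap.proj i).comp
      (ContinuousLinearMap.fst ℝ (Fin n → ℝ) (Fin n → ℝ))).hasFDerivAt.comp p
      (hXd p).hasFDerivAt).fderiv
  have hXcompd : ∀ i : Fin n, DifferentiableAt ℝ (fun q => (X q).1 i) p := fun i =>
    (((ContinuousLinearMap.proj i).comp
      (ContinuousLinearMap.fst ℝ (Fin n → ℝ) (Fin n → ℝ))).hasFDerivAt.comp p
      (hXd p).hasFDerivAt).differentiableAt
  have hS1 : ∀ w : TM n, (fderiv ℝ S p w).1 = w.2 := by
    intro w
    have h1 : fderiv ℝ (fun q : TM n => (S q).1) p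
        = (ContinuousLinearMap.fst ℝ (Fin n → ℝ) (Fin n → ℝ)).comp (fderiv ℝ S p) :=
      ((ContinuousLinearMap.fst ℝ (Fin n → ℝ) (Fin n → ℝ)).hasFDerivAt.comp p
        (hSd p).hasFDerivAt).fderiv
    have h2 : (fun q : TM n => (S q).1) = fun q : TM n => q.2 := by
      funext q; rw [hS q]
    rw [h2] at h1
    have h4 : (ContinuousLinearMap.fst ℝ (Fin n → ℝ) (Fin n → ℝ)).comp (fderiv ℝ S p)
        = ContinuousLinearMap.snd ℝ (Fin n → ℝ) (Fin n → ℝ) := by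
      rw [← h1]; exact fderiv_snd
    calc (fderiv ℝ S p w).1
        = ((ContinuousLinearMap.fst ℝ (Fin n → ℝ) (Fin n → ℝ)).comp (fderiv ℝ S p)) w := rfl
      _ = w.2 := by rw [h4]; rfl
  have key : ∀ i : Fin n, fderiv ℝ (pdy L i) p (S p) = pdx L i p := by
    intro i
    rw [fderiv_decomp, hS p]
    simp only
    have h2 : ∑ k, (-2 * G p k) * pdy (pdy L i) k p
        = (-4) * ∑ k, gmetric L i k p * G p k := by
      rw [Finset.mul_sum]
      refine Finset.sum_congr rfl fun k _ => ?_
      rw [pdy_pdy_symm L hL i k p]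
      simp only [gmetric]
      ring
    rw [h2]
    have h4 := hG.2 p i
    linarith
  have hsum : fderiv ℝ (fun q => ∑ i, pdy L i q * (X q).1 i) p (S p)
      = ∑ i, (pdy L i p * (fderiv ℝ X p (S p)).1 i + (X p).1 i * pdx L i p) := by
    rw [fderiv_fun_sum (A := fun i q => pdy L i q * (X q).1 i) (fun i _ => ((hpdyd i).mul (hXcompd i)))]
    rw [ContinuousLinearMap.sum_apply]
    refine Finset.sum_congr rfl fun i _ => ?_
    rw [fderiv_fun_mul (hpdyd i) (hXcompd i)]
    simp only [ContinuousLinearMap.add_apply, ContinuousLinearMap.smul_apply, smul_eq_mul]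
    rw [hXcomp i, key i]
    rfl
  have hbr : ∑ i, pdy L i p * (lieBr S X p).1 i
      = ∑ i, (pdy L i p * (fderiv ℝ X p (S p)).1 i - pdy L i p * (X p).2 i) := by
    refine Finset.sum_congr rfl fun i _ => ?_
    simp only [lieBr, Prod.fst_sub, Pi.sub_apply]
    rw [hS1 (X p)]
    ring
  rw [hsum, hbr, fderiv_decomp L p (X p), ← Finset.sum_sub_distrib, ← Finset.sum_add_distrib]
  refine Finset.sum_congr rfl fun i _ => ?_
  ring
end

section
/- Let L : ℝⁿ × ℝⁿ → ℝ be a smooth Lagrangian, G a canonical semispray coefficient family for L, and N^j_i = ∂Gʲ/∂yⁱ the canonical nonlinear connection coefficients. Then for every index i and every point (x,y): ∂L/∂xⁱ(x,y) − Σ_j N^j_i(x,y) ∂L/∂yʲ(x,y) = ½ ∂/∂yⁱ [ (x,y) ↦ Σ_j yʲ ∂L/∂xʲ(x,y) − 2 Σ_j Gʲ(x,y) ∂L/∂yʲ(x,y) ] (x,y); that is, the horizontal derivative satisfies δL/δxⁱ = ½ ∂(S(L))/∂yⁱ, i.e. d_hL = ½ d_J(S(L)). -/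
open scoped ContDiff

/-- Canonical nonlinear connection coefficients `N^j_i = ∂Gʲ/∂yⁱ`. -/
noncomputable def Ncoef {n : ℕ} (G : TM n → Fin n → ℝ) (j i : Fin n) (p : TM n) : ℝ :=
  pdy (fun q => G q j) i p

/-- The semispray derivative `S(F) = Σ_j yʲ ∂F/∂xʲ − 2 Σ_j Gʲ ∂F/∂yʲ`. -/
noncomputable def sprayDeriv {n : ℕ} (F : TM n → ℝ) (G : TM n → Fin n → ℝ) (p : TM n) : ℝ :=
  ∑ j, p.2 j * pdx F j p - 2 * ∑ j, G p j * pdy F j p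

/-- The horizontal derivative `δL/δxⁱ = ∂L/∂xⁱ − Σ_j N^j_i ∂L/∂yʲ`, where
`N^j_i = ∂Gʲ/∂yⁱ` are the canonical nonlinear connection coefficients. -/
noncomputable def hderiv {n : ℕ} (L : TM n → ℝ) (G : TM n → Fin n → ℝ) (i : Fin n)
    (p : TM n) : ℝ :=
  pdx L i p - ∑ j, Ncoef G j i p * pdy L j p

section Aux
variable {n : ℕ}

lemma pd_contDiff {F : TM n → ℝ} (hF : ContDiff ℝ ∞ F) (v : TM n) :
    ContDiff ℝ ∞ (fun q => fderiv ℝ F q v) :=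
  (ContinuousLinearMap.apply ℝ ℝ v).contDiff.comp (hF.fderiv_right (by exact le_rfl))

lemma fderiv_pd {F : TM n → ℝ} (hF : ContDiff ℝ ∞ F) (v w : TM n) (p : TM n) :
    fderiv ℝ (fun q => fderiv ℝ F q v) p w = fderiv ℝ (fderiv ℝ F) p v w := by
  have hd : DifferentiableAt ℝ (fderiv ℝ F) p :=
    ((hF.fderiv_right (m := ∞) le_rfl).differentiable (by norm_num)) p
  rw [fderiv_clm_apply hd (differentiableAt_const v)]
  simp only [fderiv_fun_const, Pi.zero_apply, ContinuousLinearMap.comp_zero,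
    ContinuousLinearMap.zero_apply, zero_add, ContinuousLinearMap.add_apply,
    ContinuousLinearMap.flip_apply]
  exact (hF.contDiffAt.isSymmSndFDerivAt (by simp only [minSmoothness_of_isRCLikeNormedField]; exact WithTop.coe_le_coe.2 le_top)) w v

lemma pd_symm {L : TM n → ℝ} (hL : ContDiff ℝ ∞ L) (i j : Fin n) (p : TM n) :
    pdy (pdx L j) i p = pdx (pdy L i) j p := by
  show fderiv ℝ (fun q => fderiv ℝ L q _) p _ = fderiv ℝ (fun q => fderiv ℝ L q _) p _
  rw [fderiv_pd hL, fderiv_pd hL]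
  exact (hL.contDiffAt.isSymmSndFDerivAt (by simp only [minSmoothness_of_isRCLikeNormedField]; exact WithTop.coe_le_coe.2 le_top)) _ _

lemma dirderiv_mul {f g : TM n → ℝ} {p : TM n} (hf : DifferentiableAt ℝ f p)
    (hg : DifferentiableAt ℝ g p) (v : TM n) :
    fderiv ℝ (fun q => f q * g q) p v = fderiv ℝ f p v * g p + f p * fderiv ℝ g p v := by
  rw [fderiv_fun_mul hf hg]
  simp only [ContinuousLinearMap.add_apply, ContinuousLinearMap.smul_apply, smul_eq_mul]
  ring

lemma snd_apply_fderiv (j i : Fin n) (p : TM n) :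
    fderiv ℝ (fun q : TM n => q.2 j) p ((0 : Fin n → ℝ), Pi.single i 1) =
      (Pi.single i 1 : Fin n → ℝ) j := by
  have h : HasFDerivAt (fun q : TM n => q.2 j)
      ((ContinuousLinearMap.proj j).comp (ContinuousLinearMap.snd ℝ (Fin n → ℝ) (Fin n → ℝ))) p :=
    ((ContinuousLinearMap.proj j).comp
      (ContinuousLinearMap.snd ℝ (Fin n → ℝ) (Fin n → ℝ))).hasFDerivAt
  rw [h.fderiv]
  rfl

lemma snd_diff (j : Fin n) (p : TM n) : DifferentiableAt ℝ (fun q : TM n => q.2 j) p :=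
  ((ContinuousLinearMap.proj j).comp
    (ContinuousLinearMap.snd ℝ (Fin n → ℝ) (Fin n → ℝ))).differentiableAt

end Aux

/-- `d_hL = ½ d_J(S(L))`, in coordinates
`δL/δxⁱ = ∂L/∂xⁱ − Σ_j N^j_i ∂L/∂yʲ = ½ ∂(S(L))/∂yⁱ`. -/
theorem horizontal_deriv_eq_half_fibre_deriv_of_spray_deriv (n : ℕ)
    (L : TM n → ℝ) (hL : ContDiff ℝ ∞ L)
    (G : TM n → Fin n → ℝ) (hG : IsSemisprayFamily L G) (i : Fin n) (p : TM n) :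
    hderiv L G i p = (1 / 2) * pdy (fun q => sprayDeriv L G q) i p := by
  classical
  obtain ⟨hGs, hGe⟩ := hG
  have one_le : (1 : WithTop ℕ∞) ≤ ∞ := by norm_num
  have hdL : ∀ (v : TM n) (q : TM n), DifferentiableAt ℝ (fun q' => fderiv ℝ L q' v) q :=
    fun v q => ((pd_contDiff hL v).differentiable (by simp)) q
  have hGj : ∀ (j : Fin n) (q : TM n), DifferentiableAt ℝ (fun q' => G q' j) q :=
    fun j q => ((contDiff_pi.1 hGs j).differentiable (by simp)) q
  have hA : ∀ j ∈ (Finset.univ : Finset (Fin n)), DifferentiableAt ℝ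
      (fun q : TM n => q.2 j * fderiv ℝ L q (Pi.single j 1, 0)) p :=
    fun j _ => (snd_diff j p).mul (hdL _ p)
  have hB : ∀ j ∈ (Finset.univ : Finset (Fin n)), DifferentiableAt ℝ
      (fun q : TM n => G q j * fderiv ℝ L q (0, Pi.single j 1)) p :=
    fun j _ => (hGj j p).mul (hdL _ p)
  have hSA : DifferentiableAt ℝ
      (fun q : TM n => ∑ j, q.2 j * fderiv ℝ L q (Pi.single j 1, 0)) p :=
    DifferentiableAt.fun_sum hA
  have hSB : DifferentiableAt ℝ
      (fun q : TM n => ∑ j, G q j * fderiv ℝ L q (0, Pi.single j 1)) p :=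
    DifferentiableAt.fun_sum hB
  have key : pdy (fun q => sprayDeriv L G q) i p
      = (∑ j, ((Pi.single i 1 : Fin n → ℝ) j * pdx L j p + p.2 j * pdx (pdy L i) j p))
        - 2 * ∑ j, (Ncoef G j i p * pdy L j p + G p j * (2 * gmetric L i j p)) := by
    have hfun : (fun q => sprayDeriv L G q) = fun q : TM n =>
        (∑ j, q.2 j * fderiv ℝ L q (Pi.single j 1, 0))
        - 2 * ∑ j, G q j * fderiv ℝ L q (0, Pi.single j 1) := by
      funext q; simp [sprayDeriv, pdx, pdy]
    rw [pdy, hfun, fderiv_fun_sub hSA (hSB.const_mul 2), ContinuousLinearMap.sub_apply,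
      fderiv_const_mul hSB 2, ContinuousLinearMap.smul_apply, fderiv_fun_sum hA,
      fderiv_fun_sum hB, ContinuousLinearMap.sum_apply, ContinuousLinearMap.sum_apply,
      smul_eq_mul]
    congr 1
    · refine Finset.sum_congr rfl fun j _ => ?_
      rw [dirderiv_mul (snd_diff j p) (hdL _ p), snd_apply_fderiv]
      have e1 : fderiv ℝ (fun q : TM n => fderiv ℝ L q (Pi.single j 1, 0)) p
          ((0 : Fin n → ℝ), Pi.single i 1) = pdx (pdy L i) j p := pd_symm hL i j p
      rw [e1]
      rfl
    · congr 1
      refine Finset.sum_congr rfl fun j _ => ?_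
      rw [dirderiv_mul (hGj j p) (hdL _ p)]
      have e2 : fderiv ℝ (fun q : TM n => fderiv ℝ L q (0, Pi.single j 1)) p
          ((0 : Fin n → ℝ), Pi.single i 1) = 2 * gmetric L i j p := by
        show pdy (pdy L j) i p = 2 * gmetric L i j p
        unfold gmetric; ring
      rw [e2]
      rfl
  rw [key]
  unfold hderiv
  rw [Finset.sum_add_distrib, Finset.sum_add_distrib]
  have h1 : ∑ j, (Pi.single i 1 : Fin n → ℝ) j * pdx L j p = pdx L i p := by
    simp [Pi.single_apply, ite_mul]
  have h2 : ∑ j, G p j * (2 * gmetric L i j p) = 2 * ∑ k, gmetric L i k p * G p k := by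
    rw [Finset.mul_sum]
    exact Finset.sum_congr rfl fun j _ => by ring
  rw [h1, h2]
  linarith [hGe p i]
end

section
/- Let L : ℝⁿ × ℝⁿ → ℝ be a smooth Lagrangian, G a canonical semispray coefficient family for L, and N^j_i = ∂Gʲ/∂yⁱ. If the semispray derivative S(L) = Σ_j yʲ ∂L/∂xʲ − 2 Σ_j Gʲ ∂L/∂yʲ vanishes identically on ℝⁿ × ℝⁿ, then the horizontal derivative vanishes identically: δL/δxⁱ = ∂L/∂xⁱ − Σ_j N^j_i ∂L/∂yʲ = 0 for all i and all points. In other words, if L is constant along the integral curves of the canonical semispray (solutions of the Euler–Lagrange equations), then it is constant along the horizontal curves of the canonical nonlinear connection: S(L) = 0 implies d_hL = 0. -/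
open scoped ContDiff

lemma contDiff_dirDeriv {n : ℕ} {F : TM n → ℝ} (hF : ContDiff ℝ ∞ F) (v : TM n) :
    ContDiff ℝ ∞ (fun p => fderiv ℝ F p v) :=
  (hF.fderiv_right (m := ∞) (by decide)).clm_apply contDiff_const

lemma dirDeriv_comm {n : ℕ} {F : TM n → ℝ} (hF : ContDiff ℝ ∞ F) (p v w : TM n) :
    fderiv ℝ (fun q => fderiv ℝ F q v) p w = fderiv ℝ (fun q => fderiv ℝ F q w) p v := by
  have hd : DifferentiableAt ℝ (fderiv ℝ F) p :=
    ((hF.fderiv_right (m := ∞) (by decide)).differentiable (by decide) p)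
  rw [fderiv_clm_apply hd (differentiableAt_const v),
      fderiv_clm_apply hd (differentiableAt_const w)]
  have hsymm := (hF.contDiffAt.isSymmSndFDerivAt (x := p) (by simp; decide)).eq v w
  simp [hsymm]

/-- if `L` is constant along the integral curves of the canonical
semispray, i.e. `S(L) = 0` identically, then `L` is constant along the horizontal
curves of the canonical nonlinear connection: `d_hL = 0`. -/
theorem horizontal_deriv_vanishes_of_spray_deriv_vanishes (n : ℕ)
    (L : TM n → ℝ) (hL : ContDiff ℝ ∞ L)
    (G : TM n → Fin n → ℝ) (hG : IsSemisprayFamily L G)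
    (hSL : ∀ p : TM n, sprayDeriv L G p = 0) :
    ∀ (i : Fin n) (p : TM n), hderiv L G i p = 0 := by
  intro i p
  classical
  set w : TM n := (0, Pi.single i 1) with hw
  -- differentiability facts
  have hGj : ∀ j, ContDiff ℝ ∞ (fun q : TM n => G q j) := fun j =>
    (contDiff_pi.mp hG.1 j)
  have hpdx : ∀ j, ContDiff ℝ ∞ (pdx L j) := fun j =>
    contDiff_dirDeriv hL _
  have hpdy : ∀ j, ContDiff ℝ ∞ (pdy L j) := fun j =>
    contDiff_dirDeriv hL _
  have hsnd : ∀ j : Fin n, DifferentiableAt ℝ (fun q : TM n => q.2 j) p := fun j =>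
    (((ContinuousLinearMap.proj j).comp (ContinuousLinearMap.snd ℝ (Fin n → ℝ) (Fin n → ℝ))).differentiable p)
  have hsnd_fd : ∀ j : Fin n, fderiv ℝ (fun q : TM n => q.2 j) p =
      ((ContinuousLinearMap.proj j).comp (ContinuousLinearMap.snd ℝ (Fin n → ℝ) (Fin n → ℝ))) := fun j =>
    (((ContinuousLinearMap.proj j).comp (ContinuousLinearMap.snd ℝ (Fin n → ℝ) (Fin n → ℝ))).fderiv)
  -- the spray derivative is identically zero, so its fderiv vanishes
  have hzero : fderiv ℝ (fun q => sprayDeriv L G q) p = 0 := by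
    have : (fun q : TM n => sprayDeriv L G q) = fun _ => (0 : ℝ) := funext hSL
    rw [this, fderiv_fun_const]; rfl
  -- compute the fderiv of the spray derivative in direction w
  have hA : ∀ j : Fin n, DifferentiableAt ℝ (fun q : TM n => q.2 j * pdx L j q) p := fun j =>
    (hsnd j).mul ((hpdx j).differentiable (by decide) p)
  have hB : ∀ j : Fin n, DifferentiableAt ℝ (fun q : TM n => G q j * pdy L j q) p := fun j =>
    (((hGj j).differentiable (by decide) p)).mul ((hpdy j).differentiable (by decide) p)
  have hAsum : DifferentiableAt ℝ (fun q : TM n => ∑ j, q.2 j * pdx L j q) p :=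
    DifferentiableAt.fun_sum fun j _ => hA j
  have hBsum : DifferentiableAt ℝ (fun q : TM n => ∑ j, G q j * pdy L j q) p :=
    DifferentiableAt.fun_sum fun j _ => hB j
  have hcalc : fderiv ℝ (fun q => sprayDeriv L G q) p w =
      (∑ j, ((Pi.single i 1 : Fin n → ℝ) j * pdx L j p + p.2 j * pdy (pdx L j) i p))
      - 2 * ∑ j, (Ncoef G j i p * pdy L j p + G p j * pdy (pdy L j) i p) := by
    show fderiv ℝ (fun q : TM n =>
        (∑ j, q.2 j * pdx L j q) - 2 * ∑ j, G q j * pdy L j q) p w = _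
    rw [fderiv_fun_sub hAsum (hBsum.const_mul 2)]
    simp only [ContinuousLinearMap.sub_apply]
    congr 1
    · rw [fderiv_fun_sum (fun j _ => hA j)]
      simp only [ContinuousLinearMap.sum_apply]
      refine Finset.sum_congr rfl fun j _ => ?_
      rw [fderiv_fun_mul (hsnd j) ((hpdx j).differentiable (by decide) p)]
      simp only [ContinuousLinearMap.add_apply, ContinuousLinearMap.smul_apply,
        smul_eq_mul, hsnd_fd j]
      have : ((ContinuousLinearMap.proj j).comp
          (ContinuousLinearMap.snd ℝ (Fin n → ℝ) (Fin n → ℝ))) w = (Pi.single i 1 : Fin n → ℝ) j := rfl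
      rw [this]
      have hwpd : fderiv ℝ (pdx L j) p w = pdy (pdx L j) i p := rfl
      rw [hwpd]; ring
    · rw [fderiv_const_mul hBsum, fderiv_fun_sum (fun j _ => hB j)]
      simp only [ContinuousLinearMap.smul_apply, ContinuousLinearMap.sum_apply, smul_eq_mul]
      congr 1
      refine Finset.sum_congr rfl fun j _ => ?_
      rw [fderiv_fun_mul (((hGj j).differentiable (by decide) p))
        ((hpdy j).differentiable (by decide) p)]
      simp only [ContinuousLinearMap.add_apply, ContinuousLinearMap.smul_apply, smul_eq_mul]
      have h1 : fderiv ℝ (fun q => G q j) p w = Ncoef G j i p := rfl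
      have h2 : fderiv ℝ (pdy L j) p w = pdy (pdy L j) i p := rfl
      rw [h1, h2]; ring
  rw [hzero] at hcalc
  simp only [ContinuousLinearMap.zero_apply] at hcalc
  -- simplify the first sum
  have hsingle : (∑ j, (Pi.single i 1 : Fin n → ℝ) j * pdx L j p) = pdx L i p := by
    rw [Finset.sum_eq_single i] <;> simp +contextual [Pi.single_apply]
  -- symmetry of second derivatives
  have hsym : ∀ j, pdy (pdx L j) i p = pdx (pdy L i) j p := fun j =>
    dirDeriv_comm hL p _ _
  -- pdy pdy = 2 * gmetric
  have hgm : ∀ j, pdy (pdy L j) i p = 2 * gmetric L i j p := fun j => by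
    rw [gmetric]; ring
  rw [Finset.sum_add_distrib, Finset.sum_add_distrib, hsingle] at hcalc
  simp only [hsym, hgm] at hcalc
  have hss := hG.2 p i
  have hgcomm : (∑ j, G p j * (2 * gmetric L i j p)) = 2 * ∑ k, gmetric L i k p * G p k := by
    rw [Finset.mul_sum]; exact Finset.sum_congr rfl fun j _ => by ring
  rw [hgcomm] at hcalc
  rw [hderiv]
  linarith [hcalc, hss]
end

section
/- Let L : ℝⁿ × ℝⁿ → ℝ be a smooth Lagrangian, G a canonical semispray coefficient family for L, and N^j_i = ∂Gʲ/∂yⁱ. For each point p = (x,y) define the bilinear form ω_p on ℝⁿ × ℝⁿ by ω_p((u₁,u₂),(v₁,v₂)) = Σ_{i,j} ∂²L/∂xʲ∂yⁱ(p) (u₁ʲ v₁ⁱ − v₁ʲ u₁ⁱ) + Σ_{i,j} ∂²L/∂yʲ∂yⁱ(p) (u₂ʲ v₁ⁱ − v₂ʲ u₁ⁱ), and let h_i(p) = (e_i, −(N^1_i(p),…,N^n_i(p))) ∈ ℝⁿ × ℝⁿ be the i-th adapted horizontal vector δ/δxⁱ. Then ω_p(h_i(p), h_j(p)) = 0 for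 all i, j and all p; equivalently, 2 Σ_k ( g_ik N^k_j − g_jk N^k_i ) = ∂²L/∂yⁱ∂xʲ − ∂²L/∂yʲ∂xⁱ at every point. That is, the horizontal subbundle of the canonical nonlinear connection is Lagrangian for the Cartan 2-form, so that ω_L = 2 g_ij δyʲ ∧ dxⁱ in the adapted basis. -/
open scoped ContDiff

/-- The Cartan 2-form `ω_L = d θ_L` of `L`, as a bilinear form at the point `p`. -/
noncomputable def cartan2 {n : ℕ} (L : TM n → ℝ) (p u v : TM n) : ℝ :=
  (∑ i, ∑ j, pdx (pdy L i) j p * (u.1 j * v.1 i - v.1 j * u.1 i))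
  + ∑ i, ∑ j, pdy (pdy L i) j p * (u.2 j * v.1 i - v.2 j * u.1 i)

section Aux
variable {n : ℕ}

noncomputable def pdv (F : TM n → ℝ) (w : TM n) (p : TM n) : ℝ := fderiv ℝ F p w

def wxv {n : ℕ} (a : Fin n) : TM n := (Pi.single a 1, 0)
def wyv {n : ℕ} (a : Fin n) : TM n := (0, Pi.single a 1)

lemma pdx_eq_pdv (F : TM n → ℝ) (i : Fin n) : pdx F i = pdv F (wxv i) := rfl
lemma pdy_eq_pdv (F : TM n → ℝ) (i : Fin n) : pdy F i = pdv F (wyv i) := rfl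
lemma gmetric_eq (L : TM n → ℝ) (i k : Fin n) :
    gmetric L i k = fun q => (1 / 2 : ℝ) * pdv (pdv L (wyv k)) (wyv i) q := rfl
lemma Ncoef_eq (G : TM n → Fin n → ℝ) (k j : Fin n) :
    Ncoef G k j = pdv (fun q => G q k) (wyv j) := rfl

lemma contDiff_pdv {F : TM n → ℝ} (hF : ContDiff ℝ ∞ F) (w : TM n) :
    ContDiff ℝ ∞ (pdv F w) :=
  (ContinuousLinearMap.apply ℝ ℝ w).contDiff.comp (hF.fderiv_right le_rfl)

lemma dAt {f : TM n → ℝ} (hf : ContDiff ℝ ∞ f) (q : TM n) : DifferentiableAt ℝ f q :=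
  (hf.differentiable (by simp)).differentiableAt

lemma pdv_comm {F : TM n → ℝ} (hF : ContDiff ℝ ∞ F) (v w p : TM n) :
    pdv (pdv F v) w p = pdv (pdv F w) v p := by
  have hfd : DifferentiableAt ℝ (fderiv ℝ F) p := by
    exact ((hF.fderiv_right (m := ∞) le_rfl).differentiable (by simp)).differentiableAt
  have key : ∀ u z : TM n, pdv (pdv F u) z p = fderiv ℝ (fderiv ℝ F) p z u := by
    intro u z
    show fderiv ℝ (fun q => fderiv ℝ F q u) p z = _
    rw [fderiv_clm_apply hfd (differentiableAt_const u)]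
    simp
  rw [key, key]
  exact (hF.contDiffAt.isSymmSndFDerivAt (by rw [minSmoothness_of_isRCLikeNormedField]; exact WithTop.coe_le_coe.mpr le_top)).eq w v

lemma pdv_const_mul {f : TM n → ℝ} {p : TM n} (hf : DifferentiableAt ℝ f p) (c : ℝ) (w : TM n) :
    pdv (fun q => c * f q) w p = c * pdv f w p := by
  show fderiv ℝ (fun q => c * f q) p w = _
  rw [fderiv_const_mul hf c]
  simp [pdv]

lemma pdv_mul {f g : TM n → ℝ} {p : TM n} (hf : DifferentiableAt ℝ f p)
    (hg : DifferentiableAt ℝ g p) (w : TM n) :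
    pdv (fun q => f q * g q) w p = pdv f w p * g p + f p * pdv g w p := by
  show fderiv ℝ (fun q => f q * g q) p w = _
  rw [fderiv_fun_mul hf hg]
  simp [pdv]
  ring

lemma pdv_sum {ι : Type*} {s : Finset ι} {f : ι → TM n → ℝ} {p : TM n}
    (h : ∀ i ∈ s, DifferentiableAt ℝ (f i) p) (w : TM n) :
    pdv (fun q => ∑ i ∈ s, f i q) w p = ∑ i ∈ s, pdv (f i) w p := by
  show fderiv ℝ (fun q => ∑ i ∈ s, f i q) p w = _
  rw [fderiv_fun_sum h]
  simp [pdv]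

lemma pdv_sub {f g : TM n → ℝ} {p : TM n} (hf : DifferentiableAt ℝ f p)
    (hg : DifferentiableAt ℝ g p) (w : TM n) :
    pdv (fun q => f q - g q) w p = pdv f w p - pdv g w p := by
  show fderiv ℝ (fun q => f q - g q) p w = _
  rw [fderiv_fun_sub hf hg]
  simp [pdv]

lemma pdv_snd (h : Fin n) (w p : TM n) : pdv (fun q : TM n => q.2 h) w p = w.2 h := by
  have e : (fun q : TM n => q.2 h) =
      ((ContinuousLinearMap.proj h).comp (ContinuousLinearMap.snd ℝ (Fin n → ℝ) (Fin n → ℝ))) :=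
    rfl
  show fderiv ℝ (fun q : TM n => q.2 h) p w = _
  rw [e, ContinuousLinearMap.fderiv]
  rfl

lemma contDiff_snd_apply (h : Fin n) : ContDiff ℝ ∞ (fun q : TM n => q.2 h) :=
  ((ContinuousLinearMap.proj h).comp (ContinuousLinearMap.snd ℝ (Fin n → ℝ) (Fin n → ℝ))).contDiff

end Aux

section Main
variable {n : ℕ} {L : TM n → ℝ} {G : TM n → Fin n → ℝ}

lemma contDiff_gmetric (hL : ContDiff ℝ ∞ L) (a b : Fin n) :
    ContDiff ℝ ∞ (gmetric L a b) := by
  rw [gmetric_eq]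
  exact contDiff_const.mul (contDiff_pdv (contDiff_pdv hL _) _)

lemma semispray_deriv (hL : ContDiff ℝ ∞ L) (hG : IsSemisprayFamily L G)
    (p : TM n) (i j : Fin n) :
    4 * ∑ k, pdv (gmetric L i k) (wyv j) p * G p k
      + 4 * ∑ k, gmetric L i k p * Ncoef G k j p
    = pdv (pdv L (wyv i)) (wxv j) p
      + ∑ h, p.2 h * pdv (pdv (pdv L (wyv i)) (wxv h)) (wyv j) p
      - pdv (pdv L (wxv i)) (wyv j) p := by
  obtain ⟨hGs, hGe⟩ := hG
  have hGk : ∀ k, ContDiff ℝ ∞ (fun q => G q k) := fun k => contDiff_pi.mp hGs k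
  have hgk := contDiff_gmetric hL
  have hΦΨ : (fun q => 4 * ∑ k, gmetric L i k q * G q k)
      = fun q => ∑ h, q.2 h * pdx (pdy L i) h q - pdx L i q := funext fun q => hGe q i
  have hD := congrArg (fun F => pdv F (wyv j) p) hΦΨ
  -- left side
  have hsum : ContDiff ℝ ∞ (fun q => ∑ k, gmetric L i k q * G q k) :=
    ContDiff.sum fun k _ => (hgk i k).mul (hGk k)
  rw [pdv_const_mul (dAt hsum p), pdv_sum (fun k _ => dAt ((hgk i k).mul (hGk k)) p)] at hD
  have e1 : ∀ k : Fin n, pdv (fun q => gmetric L i k q * G q k) (wyv j) p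
      = pdv (gmetric L i k) (wyv j) p * G p k + gmetric L i k p * Ncoef G k j p := by
    intro k
    rw [pdv_mul (dAt (hgk i k) p) (dAt (hGk k) p), Ncoef_eq]
  rw [Finset.sum_congr rfl (fun k _ => e1 k), Finset.sum_add_distrib, mul_add] at hD
  -- right side
  have hpdxy : ∀ (a b : Fin n), pdx (pdy L a) b = pdv (pdv L (wyv a)) (wxv b) := fun a b => rfl
  have hterm : ∀ h : Fin n, ContDiff ℝ ∞ (fun q => q.2 h * pdx (pdy L i) h q) := by
    intro h
    exact (contDiff_snd_apply h).mul
      (by rw [hpdxy]; exact contDiff_pdv (contDiff_pdv hL _) _)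
  have hS : ContDiff ℝ ∞ (fun q => ∑ h, q.2 h * pdx (pdy L i) h q) :=
    ContDiff.sum fun h _ => hterm h
  have hpdxL : ContDiff ℝ ∞ (pdx L i) := by
    rw [pdx_eq_pdv]; exact contDiff_pdv hL _
  rw [pdv_sub (dAt hS p) (dAt hpdxL p), pdv_sum (fun h _ => dAt (hterm h) p)] at hD
  have e2 : ∀ h : Fin n, pdv (fun q => q.2 h * pdx (pdy L i) h q) (wyv j) p
      = (wyv j).2 h * pdv (pdv L (wyv i)) (wxv h) p
        + p.2 h * pdv (pdv (pdv L (wyv i)) (wxv h)) (wyv j) p := by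
    intro h
    have hbf : ContDiff ℝ ∞ (pdx (pdy L i) h) := by
      rw [hpdxy]; exact contDiff_pdv (contDiff_pdv hL _) _
    rw [pdv_mul (dAt (contDiff_snd_apply h) p) (dAt hbf p), pdv_snd, hpdxy]

  rw [Finset.sum_congr rfl (fun h _ => e2 h), Finset.sum_add_distrib] at hD
  have hm : ∑ h : Fin n, (wyv j).2 h * pdv (pdv L (wyv i)) (wxv h) p
      = pdv (pdv L (wyv i)) (wxv j) p := by
    simp [wyv, Pi.single_apply, ite_mul]
  rw [hm, pdx_eq_pdv] at hD
  linarith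

lemma key2 (hL : ContDiff ℝ ∞ L) (hG : IsSemisprayFamily L G) (p : TM n) (i j : Fin n) :
    2 * ∑ k, (gmetric L i k p * Ncoef G k j p - gmetric L j k p * Ncoef G k i p)
      = pdy (pdx L j) i p - pdy (pdx L i) j p := by
  have E1 := semispray_deriv hL hG p i j
  have E2 := semispray_deriv hL hG p j i
  -- symmetry of ∂y∂y∂y terms
  have hsym1 : ∀ k : Fin n, pdv (gmetric L i k) (wyv j) p = pdv (gmetric L j k) (wyv i) p := by
    intro k
    rw [gmetric_eq L i k, gmetric_eq L j k,
      pdv_const_mul (dAt (contDiff_pdv (contDiff_pdv hL _) _) p),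
      pdv_const_mul (dAt (contDiff_pdv (contDiff_pdv hL _) _) p),
      pdv_comm (contDiff_pdv hL (wyv k)) (wyv i) (wyv j) p]
  have hA : ∑ k, pdv (gmetric L i k) (wyv j) p * G p k
      = ∑ k, pdv (gmetric L j k) (wyv i) p * G p k :=
    Finset.sum_congr rfl fun k _ => by rw [hsym1 k]
  -- symmetry of ∂y∂x∂y terms
  have hsym2 : ∀ h : Fin n, pdv (pdv (pdv L (wyv i)) (wxv h)) (wyv j) p
      = pdv (pdv (pdv L (wyv j)) (wxv h)) (wyv i) p := by
    intro h
    have c1 : pdv (pdv L (wyv i)) (wxv h) = pdv (pdv L (wxv h)) (wyv i) :=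
      funext fun q => pdv_comm hL _ _ q
    have c2 : pdv (pdv L (wyv j)) (wxv h) = pdv (pdv L (wxv h)) (wyv j) :=
      funext fun q => pdv_comm hL _ _ q
    rw [c1, c2, pdv_comm (contDiff_pdv hL (wxv h)) (wyv i) (wyv j) p]
  have hDsum : ∑ h, p.2 h * pdv (pdv (pdv L (wyv i)) (wxv h)) (wyv j) p
      = ∑ h, p.2 h * pdv (pdv (pdv L (wyv j)) (wxv h)) (wyv i) p :=
    Finset.sum_congr rfl fun h _ => by rw [hsym2 h]
  -- mixed second derivative swaps
  have q1 : pdv (pdv L (wxv i)) (wyv j) p = pdv (pdv L (wyv j)) (wxv i) p := pdv_comm hL _ _ p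
  have q2 : pdv (pdv L (wxv j)) (wyv i) p = pdv (pdv L (wyv i)) (wxv j) p := pdv_comm hL _ _ p
  rw [hA, hDsum, q1] at E1
  rw [q2] at E2
  rw [Finset.sum_sub_distrib, pdy_eq_pdv, pdy_eq_pdv, pdx_eq_pdv, pdx_eq_pdv, q1, q2]
  linarith


/-- the horizontal subbundle of the canonical nonlinear connection is
Lagrangian for the Cartan 2-form: `ω_p(δ/δxⁱ, δ/δxʲ) = 0`, equivalently
`2 Σ_k (g_ik N^k_j − g_jk N^k_i) = ∂²L/∂yⁱ∂xʲ − ∂²L/∂yʲ∂xⁱ`; hence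
`ω_L = 2 g_ij δyʲ ∧ dxⁱ` in the adapted basis. -/
theorem horizontal_subbundle_is_lagrangian (n : ℕ) (L : TM n → ℝ)
    (hL : ContDiff ℝ ∞ L) (G : TM n → Fin n → ℝ) (hG : IsSemisprayFamily L G) :
    (∀ (p : TM n) (i j : Fin n),
      cartan2 L p (Pi.single i 1, fun a => -(Ncoef G a i p))
        (Pi.single j 1, fun a => -(Ncoef G a j p)) = 0) ∧
    (∀ (p : TM n) (i j : Fin n),
      2 * ∑ k, (gmetric L i k p * Ncoef G k j p - gmetric L j k p * Ncoef G k i p)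
        = pdy (pdx L j) i p - pdy (pdx L i) j p) := by
  refine ⟨?_, fun p i j => key2 hL hG p i j⟩
  intro p i j
  have k2 := key2 hL hG p i j
  have g2 : ∀ a b : Fin n, pdy (pdy L a) b p = 2 * gmetric L a b p := by
    intro a b
    have e : pdy (pdy L a) b p = pdy (pdy L b) a p := by
      rw [pdy_eq_pdv, pdy_eq_pdv, pdy_eq_pdv, pdy_eq_pdv]
      exact pdv_comm hL _ _ p
    rw [e, gmetric]; ring
  have swap : pdy (pdx L j) i p = pdx (pdy L i) j p := by
    rw [pdy_eq_pdv, pdx_eq_pdv, pdx_eq_pdv, pdy_eq_pdv]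
    exact pdv_comm hL _ _ p
  have swap2 : pdy (pdx L i) j p = pdx (pdy L j) i p := by
    rw [pdy_eq_pdv, pdx_eq_pdv, pdx_eq_pdv, pdy_eq_pdv]
    exact pdv_comm hL _ _ p
  rw [cartan2]
  simp only [Pi.single_apply, mul_ite, mul_one, mul_zero, ite_mul, zero_mul, one_mul,
    mul_sub, mul_neg, Finset.sum_sub_distrib, Finset.sum_ite_eq, Finset.sum_ite_eq',
    Finset.mem_univ, if_true, sub_zero, zero_sub, Finset.sum_neg_distrib,
    Finset.sum_ite_irrel, Finset.sum_const_zero]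
  rw [swap, swap2, Finset.sum_sub_distrib] at k2
  have r1 : ∑ x : Fin n, pdy (pdy L j) x p * Ncoef G x i p
      = 2 * ∑ x : Fin n, gmetric L j x p * Ncoef G x i p := by
    rw [Finset.mul_sum]
    exact Finset.sum_congr rfl fun x _ => by rw [g2 j x]; ring
  have r2 : ∑ x : Fin n, pdy (pdy L i) x p * Ncoef G x j p
      = 2 * ∑ x : Fin n, gmetric L i x p * Ncoef G x j p := by
    rw [Finset.mul_sum]
    exact Finset.sum_congr rfl fun x _ => by rw [g2 i x]; ring
  rw [r1, r2]
  linarith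


end Main
end

section
/- Let L : ℝⁿ × ℝⁿ → ℝ be a smooth Lagrangian, G a canonical semispray coefficient family for L, and define the energy E_L(x,y) = Σ_k yᵏ ∂L/∂yᵏ(x,y) − L(x,y) (that is, E_L = ℂ(L) − L). Then the semispray derivative of the energy vanishes identically: S(E_L) = Σ_j yʲ ∂E_L/∂xʲ − 2 Σ_j Gʲ ∂E_L/∂yʲ = 0 at every point of ℝⁿ × ℝⁿ. In other words, the energy of a Lagrangian is a conservation law: it is constant along the integral curves of the canonical semispray (the solutions of the Euler–Lagrange equations). -/
open scoped ContDiff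

/-- Auxiliary pure-algebra lemma. -/
lemma final_algebra {n : ℕ} (y g c : Fin n → ℝ) (A B : Fin n → Fin n → ℝ)
    (hB : ∀ j k, B j k = B k j)
    (hcond : ∀ i, 2 * ∑ k, B i k * g k = (∑ h, y h * A h i) - c i) :
    (∑ j, y j * ((∑ k, y k * A j k) - c j)) - 2 * ∑ j, g j * ∑ k, y k * B j k = 0 := by
  have swap : ∑ j, g j * ∑ k, y k * B j k = ∑ k, y k * ∑ j, B k j * g j := by
    simp only [Finset.mul_sum]
    rw [Finset.sum_comm]
    exact Finset.sum_congr rfl fun k _ => Finset.sum_congr rfl fun j _ => by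
      rw [hB j k]; ring
  have h2 : 2 * ∑ j, g j * ∑ k, y k * B j k = ∑ k, y k * ((∑ h, y h * A h k) - c k) := by
    rw [swap, Finset.mul_sum]
    refine Finset.sum_congr rfl fun k _ => ?_
    rw [← hcond k]; ring
  rw [h2, sub_eq_zero]
  simp only [mul_sub, Finset.mul_sum]
  rw [Finset.sum_sub_distrib, Finset.sum_sub_distrib]
  congr 1
  rw [Finset.sum_comm]
  exact Finset.sum_congr rfl fun k _ => Finset.sum_congr rfl fun h _ => by ring

/-- the energy `E_L = ℂ(L) − L = Σ_k yᵏ ∂L/∂yᵏ − L` of a Lagrangian is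
a conservation law: its semispray derivative vanishes identically, i.e. it is
constant along the integral curves of the canonical semispray. -/
theorem energy_is_conservation_law (n : ℕ) (L : TM n → ℝ) (hL : ContDiff ℝ ∞ L)
    (G : TM n → Fin n → ℝ) (hG : IsSemisprayFamily L G)
    (E : TM n → ℝ) (hE : ∀ p : TM n, E p = (∑ k, p.2 k * pdy L k p) - L p) :
    ∀ p : TM n, sprayDeriv E G p = 0 := by
  obtain ⟨hGsmooth, hGcond⟩ := hG
  intro p
  have hLd : Differentiable ℝ L := hL.differentiable (by decide)
  have hL' : ContDiff ℝ ∞ (fderiv ℝ L) := hL.fderiv_right (by simp)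
  have hL'd : Differentiable ℝ (fderiv ℝ L) := hL'.differentiable (by decide)
  set D2 : TM n →L[ℝ] TM n →L[ℝ] ℝ := fderiv ℝ (fderiv ℝ L) p with hD2def
  have hsymm : ∀ a b : TM n, D2 a b = D2 b a :=
    (hL.contDiffAt.isSymmSndFDerivAt (by simp only [minSmoothness_of_isRCLikeNormedField]; decide)).eq
  have hDw : ∀ w : TM n, HasFDerivAt (fun q : TM n => fderiv ℝ L q w)
      (D2.flip w) p := by
    intro w
    have h := (hL'd p).hasFDerivAt.clm_apply (hasFDerivAt_const w p)
    simpa using h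
  have hmixed : ∀ (w z : TM n), fderiv ℝ (fun q : TM n => fderiv ℝ L q w) p z = D2 z w := by
    intro w z
    rw [(hDw w).fderiv]
    rfl
  -- second derivative expressions
  have hpyy : ∀ i k : Fin n, pdy (pdy L k) i p
      = D2 (0, Pi.single i 1) (0, Pi.single k 1) := fun i k => hmixed _ _
  have hpxy : ∀ h i : Fin n, pdx (pdy L i) h p
      = D2 (Pi.single h 1, 0) (0, Pi.single i 1) := fun h i => hmixed _ _
  -- the semispray condition in these terms
  have hcond : ∀ i, 2 * ∑ k, D2 (0, Pi.single i 1) (0, Pi.single k 1) * G p k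
      = (∑ h, p.2 h * D2 (Pi.single h 1, 0) (0, Pi.single i 1))
        - fderiv ℝ L p (Pi.single i 1, 0) := by
    intro i
    have h := hGcond p i
    simp only [gmetric, hpyy, hpxy] at h
    simp only [pdx] at h
    rw [← h, Finset.mul_sum, Finset.mul_sum]
    exact Finset.sum_congr rfl fun k _ => by ring
  -- derivative of E
  have hcoord : ∀ k : Fin n, HasFDerivAt (fun q : TM n => q.2 k)
      ((ContinuousLinearMap.proj k).comp
        (ContinuousLinearMap.snd ℝ (Fin n → ℝ) (Fin n → ℝ))) p :=
    fun k => ((ContinuousLinearMap.proj (R := ℝ) (φ := fun _ : Fin n => ℝ) k).comp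
      (ContinuousLinearMap.snd ℝ (Fin n → ℝ) (Fin n → ℝ))).hasFDerivAt
  have hEderiv : HasFDerivAt E
      ((∑ k, (p.2 k • D2.flip (0, Pi.single k 1)
        + (fderiv ℝ L p (0, Pi.single k 1)) •
          ((ContinuousLinearMap.proj k).comp
            (ContinuousLinearMap.snd ℝ (Fin n → ℝ) (Fin n → ℝ)))))
        - fderiv ℝ L p) p := by
    have hEeq : E = fun q => (∑ k, q.2 k * fderiv ℝ L q (0, Pi.single k 1)) - L q :=
      funext fun q => hE q
    rw [hEeq]
    exact (HasFDerivAt.fun_sum (fun k _ => (hcoord k).mul (hDw (0, Pi.single k 1)))).sub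
      (hLd p).hasFDerivAt
  have hfE := hEderiv.fderiv
  have hpdx : ∀ j, pdx E j p
      = (∑ k, p.2 k * D2 (Pi.single j 1, 0) (0, Pi.single k 1))
        - fderiv ℝ L p (Pi.single j 1, 0) := by
    intro j
    show fderiv ℝ E p (Pi.single j 1, 0) = _
    rw [hfE]
    simp [ContinuousLinearMap.sum_apply]
  have hpdy : ∀ j, pdy E j p
      = ∑ k, p.2 k * D2 (0, Pi.single j 1) (0, Pi.single k 1) := by
    intro j
    show fderiv ℝ E p (0, Pi.single j 1) = _
    rw [hfE]
    simp [ContinuousLinearMap.sum_apply, Pi.single_apply, mul_ite, Finset.sum_add_distrib,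
      Finset.sum_ite_eq']
  -- assemble
  unfold sprayDeriv
  simp only [hpdx, hpdy]
  exact final_algebra p.2 (G p) (fun i => fderiv ℝ L p (Pi.single i 1, 0))
    (fun j k => D2 (Pi.single j 1, 0) (0, Pi.single k 1))
    (fun j k => D2 (0, Pi.single j 1) (0, Pi.single k 1))
    (fun j k => hsymm _ _) hcond
end
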